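/- Let X be a nonempty compact polytope in R^d, C ⊆ R^d nonempty, and suppose every extreme point of every optimal face argmin_{x∈X} c^T x (c ∈ C) belongs to X*(C). If an affine subspace V satisfies dir(X*(C)) ⊆ dir(V) and V ∩ X*(C) ≠ ∅, then V is exact-sketching on C: for every c∈C, argmin_{x∈X∩V} c^T x = argmin_{x∈X} c^T x. -/

import Mathlib

/-- The set of minimizers of `f` over `X`. -/
def argminOn {α : Type*} (f : α → ℝ) (X : Set α) : Set α :=
  {x ∈ X | ∀ y ∈ X, f x ≤ f y}

/-- The linear objective `x ↦ cᵀ x`. -/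
def dotObj {d : ℕ} (c : Fin d → ℝ) : (Fin d → ℝ) → ℝ :=
  fun x => ∑ i, c i * x i

lemma dotObj_comb {d : ℕ} (c x y : Fin d → ℝ) (a b : ℝ) :
    dotObj c (a • x + b • y) = a * dotObj c x + b * dotObj c y := by
  simp only [dotObj, Finset.mul_sum]
  rw [← Finset.sum_add_distrib]
  refine Finset.sum_congr rfl fun i _ => ?_
  simp [Pi.add_apply, Pi.smul_apply, smul_eq_mul]
  ring

lemma dotObj_continuous {d : ℕ} (c : Fin d → ℝ) : Continuous (dotObj c) := by
  unfold dotObj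
  exact continuous_finset_sum _ fun i _ => continuous_const.mul (continuous_apply i)

theorem stmt_4 {d : ℕ} (X C : Set (Fin d → ℝ))
    (hXne : X.Nonempty) (hXcomp : IsCompact X)
    (hXpoly : ∃ s : Finset (Fin d → ℝ), X = convexHull ℝ (s : Set (Fin d → ℝ)))
    (hCne : C.Nonempty)
    (hext : ∀ c ∈ C,
      Set.extremePoints ℝ (argminOn (dotObj c) X) ⊆ ⋃ c' ∈ C, argminOn (dotObj c') X)
    (V : AffineSubspace ℝ (Fin d → ℝ))
    (hdir : Submodule.span ℝ {v : Fin d → ℝ |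
        ∃ x ∈ ⋃ c ∈ C, argminOn (dotObj c) X, ∃ x' ∈ ⋃ c ∈ C, argminOn (dotObj c) X,
          v = x - x'} ≤ V.direction)
    (hmeet : ((V : Set (Fin d → ℝ)) ∩ ⋃ c ∈ C, argminOn (dotObj c) X).Nonempty) :
    ∀ c ∈ C,
      argminOn (dotObj c) (X ∩ (V : Set (Fin d → ℝ))) = argminOn (dotObj c) X := by
  intro c hc
  obtain ⟨s, hs⟩ := hXpoly
  set f := dotObj c with hf
  set F := argminOn f X with hF
  set U := ⋃ c' ∈ C, argminOn (dotObj c') X with hU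
  have hcont : Continuous f := dotObj_continuous c
  -- F is nonempty
  obtain ⟨x₀, hx₀X, hx₀min⟩ := hXcomp.exists_isMinOn hXne hcont.continuousOn
  have hFne : F.Nonempty := ⟨x₀, hx₀X, fun y hy => hx₀min hy⟩
  have hXconv : Convex ℝ X := hs ▸ convex_convexHull ℝ _
  -- F is convex
  have hFconv : Convex ℝ F := by
    intro x hx y hy a b ha hb hab
    refine ⟨hXconv hx.1 hy.1 ha hb hab, fun z hz => ?_⟩
    have h1 := hx.2 z hz
    have h2 := hy.2 z hz
    have ha1 := mul_le_mul_of_nonneg_left h1 ha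
    have hb1 := mul_le_mul_of_nonneg_left h2 hb
    have hz1 : a * f z + b * f z = f z := by rw [← add_mul, hab, one_mul]
    calc f (a • x + b • y) = a * f x + b * f y := dotObj_comb c x y a b
      _ ≤ f z := by linarith
  -- F is compact
  have hFcomp : IsCompact F := by
    have : F = X ∩ f ⁻¹' Set.Iic (f x₀) := by
      ext z
      constructor
      · exact fun hz => ⟨hz.1, hz.2 x₀ hx₀X⟩
      · exact fun hz => ⟨hz.1, fun y hy => le_trans hz.2 (hx₀min hy)⟩
    rw [this]
    exact hXcomp.inter_right (isClosed_Iic.preimage hcont)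
  -- F is an extreme subset of X
  have hFext : IsExtreme ℝ X F := by
    constructor
    · exact fun z hz => hz.1
    · rintro x1 hx1 x2 hx2 x hx ⟨a, b, ha, hb, hab, hsum⟩
      have h1 : f x ≤ f x1 := hx.2 x1 hx1
      have h2 : f x ≤ f x2 := hx.2 x2 hx2
      have hcomb : a * f x1 + b * f x2 = f x := by
        rw [← dotObj_comb, hsum]
      have hb2 : b * f x ≤ b * f x2 := mul_le_mul_of_nonneg_left h2 hb.le
      have ha2 : a * f x ≤ a * f x1 := mul_le_mul_of_nonneg_left h1 ha.le
      have hxx : a * f x + b * f x = f x := by rw [← add_mul, hab, one_mul]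
      have e1 : f x1 = f x :=
        le_antisymm (le_of_mul_le_mul_left (by linarith) ha) h1
      have e2 : f x2 = f x :=
        le_antisymm (le_of_mul_le_mul_left (by linarith) hb) h2
      exact ⟨hx1, fun y hy => e1 ▸ hx.2 y hy⟩
  -- extreme points of F are finitely many
  have hEsub : Set.extremePoints ℝ F ⊆ (s : Set (Fin d → ℝ)) := by
    refine (hFext.extremePoints_subset_extremePoints).trans ?_
    rw [hs]
    exact extremePoints_convexHull_subset
  have hEfin : (Set.extremePoints ℝ F).Finite := s.finite_toSet.subset hEsub
  -- Krein-Milman: F = convexHull of its extreme points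
  have hKM : F = convexHull ℝ (Set.extremePoints ℝ F) := by
    have h := closure_convexHull_extremePoints hFcomp hFconv
    rw [(hEfin.isClosed_convexHull (𝕜 := ℝ)).closure_eq] at h
    exact h.symm
  -- base point in V ∩ U
  obtain ⟨p, hpV, hpU⟩ := hmeet
  -- extreme points of F lie in V
  have hEV : Set.extremePoints ℝ F ⊆ (V : Set (Fin d → ℝ)) := by
    intro e he
    have heU : e ∈ U := hext c hc he
    have hv : e - p ∈ V.direction :=
      hdir (Submodule.subset_span ⟨e, heU, p, hpU, rfl⟩)
    have := AffineSubspace.vadd_mem_of_mem_direction hv hpV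
    simpa [vadd_eq_add, sub_add_cancel] using this
  -- F ⊆ V
  have hFV : F ⊆ (V : Set (Fin d → ℝ)) := by
    rw [hKM]
    exact convexHull_min hEV V.convex
  -- conclude
  ext x
  constructor
  · rintro ⟨⟨hxX, hxV⟩, hxmin⟩
    obtain ⟨w, hwF⟩ := hFne
    have hwXV : w ∈ X ∩ (V : Set (Fin d → ℝ)) := ⟨hwF.1, hFV hwF⟩
    exact ⟨hxX, fun y hy => le_trans (hxmin w hwXV) (hwF.2 y hy)⟩
  · intro hxF
    exact ⟨⟨hxF.1, hFV hxF⟩, fun y hy => hxF.2 y hy.1⟩
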